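/- arXiv:2010.13199 — 2 statements merged into one kernel-verified Lean document; each statement's English description precedes it below -/
import Mathlib

section
/- Let M = [a,b) and N = [c,d) be interval modules (0 ≤ a < b, 0 ≤ c < d) with (a,b) ≠ (c,d), and let D = min{ max{|a−c|,|b−d|}, max{(b−a)/2,(d−c)/2} }. Then D > 0 and there exists a D-interleaving between M and N; that is, the interleaving distance between two distinct interval modules is attained. -/
open scoped NNReal

/-- A persistence module: a functor from `[0,∞)` to real vector spaces. -/
structure PM where
  V : ℝ≥0 → Type
  [grp : ∀ x, AddCommGroup (V x)]
  [mod : ∀ x, Module ℝ (V x)]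
  map : ∀ {x y : ℝ≥0}, x ≤ y → (V x →ₗ[ℝ] V y)
  map_id : ∀ x : ℝ≥0, map (le_refl x) = LinearMap.id
  map_comp : ∀ {x y z : ℝ≥0} (h1 : x ≤ y) (h2 : y ≤ z),
    (map h2).comp (map h1) = map (h1.trans h2)

attribute [instance] PM.grp PM.mod

/-- A morphism of persistence modules. -/
structure PM.Hom (M N : PM) where
  app : ∀ x : ℝ≥0, M.V x →ₗ[ℝ] N.V x
  comm : ∀ {x y : ℝ≥0} (h : x ≤ y), (app y).comp (M.map h) = (N.map h).comp (app x)

/-- The shifted module `M·ε`. -/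
def PM.shift (M : PM) (ε : ℝ≥0) : PM where
  V x := M.V (x + ε)
  grp x := inferInstance
  mod x := inferInstance
  map h := M.map (add_le_add h (le_refl ε))
  map_id x := M.map_id (x + ε)
  map_comp h1 h2 := M.map_comp _ _

noncomputable def intervalSub (α β : ℝ) (x : ℝ≥0) : Submodule ℝ ℝ :=
  if α ≤ (x : ℝ) ∧ (x : ℝ) < β then ⊤ else ⊥

/-- The interval module `[α,β)`. -/
noncomputable def intervalModule (α β : ℝ) : PM where
  V x := ↥(intervalSub α β x)
  grp x := inferInstance
  mod x := inferInstance
  map {x y} h := LinearMap.codRestrict _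
      ((if α ≤ (x : ℝ) ∧ (y : ℝ) < β then (1 : ℝ) else 0) • (intervalSub α β x).subtype)
      (by
        intro v
        by_cases hy : α ≤ (y : ℝ) ∧ (y : ℝ) < β
        · simp [intervalSub, hy]
        · have hc : ¬(α ≤ (x : ℝ) ∧ (y : ℝ) < β) := by
            intro hc
            exact hy ⟨le_trans hc.1 (by exact_mod_cast h), hc.2⟩
          rw [if_neg hc, zero_smul, LinearMap.zero_apply]
          exact Submodule.zero_mem _)
  map_id x := by
    ext v
    by_cases hx : α ≤ (x : ℝ) ∧ (x : ℝ) < β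
    · simp [hx]
    · have hv : (v : ℝ) = 0 := by
        have h2 := v.2
        simp only [intervalSub, if_neg hx, Submodule.mem_bot] at h2
        exact h2
      simp [hx, hv]
  map_comp {x y z} h1 h2 := by
    ext v
    by_cases hC : α ≤ (x : ℝ) ∧ (z : ℝ) < β
    · have hA : α ≤ (x : ℝ) ∧ (y : ℝ) < β :=
        ⟨hC.1, lt_of_le_of_lt (by exact_mod_cast h2) hC.2⟩
      have hB : α ≤ (y : ℝ) ∧ (z : ℝ) < β :=
        ⟨le_trans hC.1 (by exact_mod_cast h1), hC.2⟩
      simp [hA, hB, hC]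
    · rcases not_and_or.mp hC with hx | hz
      · have hA : ¬(α ≤ (x : ℝ) ∧ (y : ℝ) < β) := fun h => hx h.1
        simp [hA, hC]
        split_ifs <;> simp
      · have hB : ¬(α ≤ (y : ℝ) ∧ (z : ℝ) < β) := fun h => hz h.2
        simp [hB, hC]

/-- `Hom(M,N) ≠ {0}`: there is a nonzero morphism from `M` to `N`. -/
def HomNeZero (M N : PM) : Prop := ∃ F : PM.Hom M N, ∃ x, F.app x ≠ 0

/-- `S_{M,N} = {x ≥ 0 : Hom(M, N·x) ≠ {0}}`. -/
noncomputable def Sset (M N : PM) : Set ℝ :=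
  {x : ℝ | 0 ≤ x ∧ HomNeZero M (N.shift x.toNNReal)}

/-- The canonical morphism `Π_M^{M·τ} : M → M·τ`. -/
def PM.pi (M : PM) (τ : ℝ≥0) : M.Hom (M.shift τ) where
  app x := M.map le_self_add
  comm {x y} h := by
    show (M.map le_self_add).comp (M.map h) =
      (M.map (add_le_add h (le_refl τ))).comp (M.map le_self_add)
    rw [M.map_comp, M.map_comp]

/-- The pair `(Φ, Ψ)` is an `ε`-interleaving between `M` and `N`:
`(Ψ·ε) ∘ Φ = Π_M^{M·2ε}` and `(Φ·ε) ∘ Ψ = Π_N^{N·2ε}` (expressed pointwise). -/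
def IsInterleaving (M N : PM) (ε : ℝ≥0)
    (Φ : M.Hom (N.shift ε)) (Ψ : N.Hom (M.shift ε)) : Prop :=
  (∀ x : ℝ≥0, (Ψ.app (x + ε)).comp (Φ.app x) =
      M.map (le_self_add.trans le_self_add : x ≤ x + ε + ε)) ∧
  (∀ x : ℝ≥0, (Φ.app (x + ε)).comp (Ψ.app x) =
      N.map (le_self_add.trans le_self_add : x ≤ x + ε + ε))


lemma ind_mul (P Q : Prop) [Decidable P] [Decidable Q] (r : ℝ) :
    (if P then (1:ℝ) else 0) * ((if Q then (1:ℝ) else 0) * r) = if P ∧ Q then r else 0 := by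
  split_ifs <;> simp_all

noncomputable def connect (α β γ δ : ℝ) (ε : ℝ≥0) (h1 : γ ≤ α + ε) (h2 : δ ≤ β + ε) :
    (intervalModule α β).Hom ((intervalModule γ δ).shift ε) where
  app x := LinearMap.codRestrict _
    ((if α ≤ (x : ℝ) ∧ (x : ℝ) + ε < δ then (1 : ℝ) else 0) • (intervalSub α β x).subtype)
    (by
      intro v
      by_cases hx : α ≤ (x : ℝ) ∧ (x : ℝ) + ε < δ
      · show _ ∈ intervalSub γ δ (x + ε)
        have hm : γ ≤ ((x + ε : ℝ≥0) : ℝ) ∧ ((x + ε : ℝ≥0) : ℝ) < δ := by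
          push_cast
          exact ⟨by linarith [hx.1], hx.2⟩
        rw [intervalSub, if_pos hm]
        exact Submodule.mem_top
      · rw [if_neg hx, zero_smul]
        exact Submodule.zero_mem _)
  comm {x y} h := by
    have hxy : (x : ℝ) ≤ y := by exact_mod_cast h
    ext v
    apply Subtype.ext
    show (if α ≤ (y:ℝ) ∧ (y:ℝ) + (ε:ℝ) < δ then (1:ℝ) else 0) *
        ((if α ≤ (x:ℝ) ∧ (y:ℝ) < β then (1:ℝ) else 0) * (show ↥(intervalSub α β x) from v).1) =
      (if γ ≤ ((x:ℝ) + (ε:ℝ)) ∧ ((y:ℝ) + (ε:ℝ)) < δ then (1:ℝ) else 0) *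
        ((if α ≤ (x:ℝ) ∧ (x:ℝ) + (ε:ℝ) < δ then (1:ℝ) else 0) * (show ↥(intervalSub α β x) from v).1)
    generalize (show ↥(intervalSub α β x) from v).1 = r
    push_cast
    rw [ind_mul, ind_mul]
    have e1 : (α ≤ (y:ℝ) ∧ (y:ℝ) + ε < δ) ∧ (α ≤ (x:ℝ) ∧ (y:ℝ) < β) ↔
        (γ ≤ (x:ℝ) + ε ∧ (y:ℝ) + ε < δ) ∧ (α ≤ (x:ℝ) ∧ (x:ℝ) + ε < δ) := by
      constructor
      · rintro ⟨⟨hay, hyd⟩, hax, hyb⟩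
        exact ⟨⟨by linarith, hyd⟩, hax, by linarith⟩
      · rintro ⟨⟨hgx, hyd⟩, hax, hxd⟩
        exact ⟨⟨by linarith, hyd⟩, hax, by linarith⟩
    rw [if_congr e1 rfl rfl]

lemma connect_interleaving (a b c d : ℝ) (ε : ℝ≥0) (h1 : c ≤ a + ε) (h2 : d ≤ b + ε)
    (h3 : a ≤ c + ε) (h4 : b ≤ d + ε) :
    IsInterleaving (intervalModule a b) (intervalModule c d) ε
      (connect a b c d ε h1 h2) (connect c d a b ε h3 h4) := by
  constructor
  · intro x
    ext v
    apply Subtype.ext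
    show (if c ≤ ((x:ℝ) + (ε:ℝ)) ∧ ((x:ℝ) + (ε:ℝ)) + (ε:ℝ) < b then (1:ℝ) else 0) *
        ((if a ≤ (x:ℝ) ∧ (x:ℝ) + (ε:ℝ) < d then (1:ℝ) else 0) * (show ↥(intervalSub a b x) from v).1) =
      (if a ≤ (x:ℝ) ∧ ((x:ℝ) + (ε:ℝ) + (ε:ℝ)) < b then (1:ℝ) else 0) * (show ↥(intervalSub a b x) from v).1
    generalize (show ↥(intervalSub a b x) from v).1 = r
    push_cast
    rw [ind_mul]
    have e1 : (c ≤ (x:ℝ) + ε ∧ (x:ℝ) + ε + ε < b) ∧ (a ≤ (x:ℝ) ∧ (x:ℝ) + ε < d) ↔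
        (a ≤ (x:ℝ) ∧ (x:ℝ) + ε + ε < b) := by
      constructor
      · rintro ⟨⟨_, hxb⟩, hax, _⟩
        exact ⟨hax, hxb⟩
      · rintro ⟨hax, hxb⟩
        exact ⟨⟨by linarith, hxb⟩, hax, by linarith⟩
    rw [if_congr e1 rfl rfl]
    split_ifs <;> simp
  · intro x
    ext v
    apply Subtype.ext
    show (if a ≤ ((x:ℝ) + (ε:ℝ)) ∧ ((x:ℝ) + (ε:ℝ)) + (ε:ℝ) < d then (1:ℝ) else 0) *
        ((if c ≤ (x:ℝ) ∧ (x:ℝ) + (ε:ℝ) < b then (1:ℝ) else 0) * (show ↥(intervalSub c d x) from v).1) =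
      (if c ≤ (x:ℝ) ∧ ((x:ℝ) + (ε:ℝ) + (ε:ℝ)) < d then (1:ℝ) else 0) * (show ↥(intervalSub c d x) from v).1
    generalize (show ↥(intervalSub c d x) from v).1 = r
    push_cast
    rw [ind_mul]
    have e1 : (a ≤ (x:ℝ) + ε ∧ (x:ℝ) + ε + ε < d) ∧ (c ≤ (x:ℝ) ∧ (x:ℝ) + ε < b) ↔
        (c ≤ (x:ℝ) ∧ (x:ℝ) + ε + ε < d) := by
      constructor
      · rintro ⟨⟨_, hxd⟩, hcx, _⟩
        exact ⟨hcx, hxd⟩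
      · rintro ⟨hcx, hxd⟩
        exact ⟨⟨by linarith, hxd⟩, hcx, by linarith⟩
    rw [if_congr e1 rfl rfl]
    split_ifs <;> simp

/-- The zero morphism. -/
def zeroHom (M N : PM) : M.Hom N where
  app _ := 0
  comm _ := by simp

lemma intervalModule_map_eq_zero (α β : ℝ) {x y : ℝ≥0} (h : x ≤ y)
    (hc : ¬(α ≤ (x:ℝ) ∧ (y:ℝ) < β)) : (intervalModule α β).map h = 0 := by
  ext v
  apply Subtype.ext
  simp [intervalModule, hc]
  rfl

lemma zero_interleaving (a b c d : ℝ) (ε : ℝ≥0) (h1 : b ≤ a + ε + ε) (h2 : d ≤ c + ε + ε) :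
    IsInterleaving (intervalModule a b) (intervalModule c d) ε
      (zeroHom _ _) (zeroHom _ _) := by
  constructor
  · intro x
    rw [intervalModule_map_eq_zero a b _ (by
      rintro ⟨h5, h6⟩
      push_cast at h6
      linarith)]
    exact LinearMap.comp_zero _
  · intro x
    rw [intervalModule_map_eq_zero c d _ (by
      rintro ⟨h5, h6⟩
      push_cast at h6
      linarith)]
    exact LinearMap.comp_zero _

theorem stmt11 (a b c d D : ℝ) (ha : 0 ≤ a) (hab : a < b) (hc : 0 ≤ c) (hcd : c < d) (hne : ¬(a = c ∧ b = d))
    (hD : D = min (max |a - c| |b - d|) (max ((b - a) / 2) ((d - c) / 2))) :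
    0 < D ∧ ∃ Φ Ψ, IsInterleaving (intervalModule a b) (intervalModule c d) D.toNNReal Φ Ψ := by
  have hD1 : 0 < max |a - c| |b - d| := by
    rcases not_and_or.mp hne with h | h
    · exact lt_of_lt_of_le (abs_pos.mpr (sub_ne_zero.mpr h)) (le_max_left _ _)
    · exact lt_of_lt_of_le (abs_pos.mpr (sub_ne_zero.mpr h)) (le_max_right _ _)
  have hD2 : 0 < max ((b - a) / 2) ((d - c) / 2) :=
    lt_of_lt_of_le (by linarith) (le_max_left _ _)
  have hDpos : 0 < D := by rw [hD]; exact lt_min hD1 hD2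
  refine ⟨hDpos, ?_⟩
  have hcoe : ((D.toNNReal : ℝ≥0) : ℝ) = D := Real.coe_toNNReal D hDpos.le
  by_cases hcase : max |a - c| |b - d| ≤ max ((b - a) / 2) ((d - c) / 2)
  · have hDeq : D = max |a - c| |b - d| := by rw [hD, min_eq_left hcase]
    have hac : |a - c| ≤ D := hDeq ▸ le_max_left _ _
    have hbd : |b - d| ≤ D := hDeq ▸ le_max_right _ _
    rw [abs_le] at hac hbd
    have h1 : c ≤ a + ((D.toNNReal : ℝ≥0) : ℝ) := by rw [hcoe]; linarith [hac.1, hac.2]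
    have h2 : d ≤ b + ((D.toNNReal : ℝ≥0) : ℝ) := by rw [hcoe]; linarith [hbd.1, hbd.2]
    have h3 : a ≤ c + ((D.toNNReal : ℝ≥0) : ℝ) := by rw [hcoe]; linarith [hac.1, hac.2]
    have h4 : b ≤ d + ((D.toNNReal : ℝ≥0) : ℝ) := by rw [hcoe]; linarith [hbd.1, hbd.2]
    exact ⟨_, _, connect_interleaving a b c d _ h1 h2 h3 h4⟩
  · have hDeq : D = max ((b - a) / 2) ((d - c) / 2) := by
      rw [hD, min_eq_right (le_of_not_ge hcase)]
    have hba : (b - a) / 2 ≤ D := hDeq ▸ le_max_left _ _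
    have hdc : (d - c) / 2 ≤ D := hDeq ▸ le_max_right _ _
    have h1 : b ≤ a + ((D.toNNReal : ℝ≥0) : ℝ) + ((D.toNNReal : ℝ≥0) : ℝ) := by
      rw [hcoe]; linarith
    have h2 : d ≤ c + ((D.toNNReal : ℝ≥0) : ℝ) + ((D.toNNReal : ℝ≥0) : ℝ) := by
      rw [hcoe]; linarith
    exact ⟨_, _, zero_interleaving a b c d _ h1 h2⟩
end

section
/- Let M = [a,b) and N = [c,d) be interval modules (0 ≤ a < b, 0 ≤ c < d). If 0 < ε < min{ max{|a−c|,|b−d|}, max{(b−a)/2,(d−c)/2} }, then there is no ε-interleaving between M and N. -/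
open scoped NNReal

lemma intervalSub_eq_top {α β : ℝ} {x : ℝ≥0} (h : α ≤ (x:ℝ) ∧ (x:ℝ) < β) :
    intervalSub α β x = ⊤ := if_pos h

lemma intervalSub_eq_bot {α β : ℝ} {x : ℝ≥0} (h : ¬(α ≤ (x:ℝ) ∧ (x:ℝ) < β)) :
    intervalSub α β x = ⊥ := if_neg h

lemma im_zero {α β : ℝ} {x : ℝ≥0} (h : ¬(α ≤ (x:ℝ) ∧ (x:ℝ) < β))
    (v : (intervalModule α β).V x) : v = 0 := by
  have h2 := v.2
  simp only [intervalSub, if_neg h, Submodule.mem_bot] at h2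
  exact Subtype.ext h2

noncomputable def imOne (α β : ℝ) (x : ℝ≥0) (h : α ≤ (x:ℝ) ∧ (x:ℝ) < β) :
    (intervalModule α β).V x := ⟨1, by rw [intervalSub_eq_top h]; trivial⟩

lemma im_map_coe {α β : ℝ} {x y : ℝ≥0} (h : x ≤ y) (v : (intervalModule α β).V x) :
    (((intervalModule α β).map h) v).1
      = (if α ≤ (x:ℝ) ∧ (y:ℝ) < β then (1:ℝ) else 0) * v.1 := rfl

lemma middle_zero {a b c d : ℝ} {ε : ℝ≥0}
    {Φ : (intervalModule a b).Hom ((intervalModule c d).shift ε)}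
    {Ψ : (intervalModule c d).Hom ((intervalModule a b).shift ε)}
    (h : IsInterleaving (intervalModule a b) (intervalModule c d) ε Φ Ψ)
    (x : ℝ≥0) (hx : a ≤ (x:ℝ)) (hxb : (x:ℝ) + ε + ε < b)
    (hmid : ¬(c ≤ (x:ℝ) + (ε:ℝ) ∧ (x:ℝ) + (ε:ℝ) < d)) : False := by
  have hxb' : (x:ℝ) < b := by
    have : (0:ℝ) ≤ (ε:ℝ) := ε.2
    linarith
  set v := imOne a b x ⟨hx, hxb'⟩ with hv
  have h1 := h.1 x
  have h2 : (Ψ.app (x+ε)) ((Φ.app x) v) =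
      (intervalModule a b).map (le_self_add.trans le_self_add : x ≤ x + ε + ε) v := by
    have := congrArg (fun F => F v) h1
    exact this
  have hΦ : (Φ.app x) v = 0 := by
    refine im_zero (x := x + ε) ?_ ((Φ.app x) v)
    push_cast
    exact hmid
  rw [show (Ψ.app (x+ε)) ((Φ.app x) v) = 0 by rw [hΦ]; exact map_zero _] at h2
  have h3 : (((intervalModule a b).map
      (le_self_add.trans le_self_add : x ≤ x + ε + ε)) v).1 = 0 := by
    rw [← h2]; rfl
  have hif : a ≤ (x:ℝ) ∧ ((x + ε + ε : ℝ≥0) : ℝ) < b := by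
    push_cast
    exact ⟨hx, hxb⟩
  rw [im_map_coe, if_pos hif] at h3
  simp [hv, imOne] at h3

lemma main_aux {a b c d ε : ℝ} (ha : 0 ≤ a) (hab : a < b) (hc : 0 ≤ c) (hcd : c < d)
    (hε : 0 < ε) (h2 : 2*ε < b - a) (hmax : ε < max |a - c| |b - d|)
    {Φ Ψ} (hI : IsInterleaving (intervalModule a b) (intervalModule c d) ε.toNNReal Φ Ψ) :
    False := by
  have he : ((ε.toNNReal : ℝ≥0) : ℝ) = ε := Real.coe_toNNReal _ hε.le
  have hI' : IsInterleaving (intervalModule c d) (intervalModule a b) ε.toNNReal Ψ Φ :=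
    ⟨hI.2, hI.1⟩
  have step1 : ∀ x0 : ℝ, 0 ≤ x0 → a ≤ x0 → x0 + ε + ε < b → (c ≤ x0 + ε ∧ x0 + ε < d) := by
    intro x0 h0 hA hB
    by_contra hmid
    refine middle_zero hI x0.toNNReal ?_ ?_ ?_ <;>
      simp only [Real.coe_toNNReal _ h0, he] <;> assumption
  have step2 : ∀ x0 : ℝ, 0 ≤ x0 → c ≤ x0 → x0 + ε + ε < d →
      ¬(a ≤ x0 + ε ∧ x0 + ε < b) → False := by
    intro x0 h0 hA hB hmid
    refine middle_zero hI' x0.toNNReal ?_ ?_ ?_ <;>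
      simp only [Real.coe_toNNReal _ h0, he] <;> assumption
  obtain ⟨h_ca, h_ad⟩ := step1 a ha le_rfl (by linarith)
  have h_bd : b - ε ≤ d := by
    by_contra hcon
    push_neg at hcon
    have h0 : 0 ≤ max a (d - ε) := le_max_of_le_left ha
    obtain ⟨_, hx2⟩ := step1 (max a (d - ε)) h0 (le_max_left _ _)
      (by
        rcases max_cases a (d - ε) with ⟨hm, _⟩ | ⟨hm, _⟩ <;> rw [hm] <;> linarith)
    have : d - ε ≤ max a (d - ε) := le_max_right _ _
    linarith
  have h_ac : a ≤ c + ε := by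
    by_contra hcon
    push_neg at hcon
    exact step2 c hc le_rfl (by linarith) (by push_neg; intro habs; linarith)
  have h_db : d ≤ b + ε := by
    by_contra hcon
    push_neg at hcon
    have h0 : 0 ≤ max c (b - ε) := le_max_of_le_left hc
    refine step2 (max c (b - ε)) h0 (le_max_left _ _)
      (by
        rcases max_cases c (b - ε) with ⟨hm, _⟩ | ⟨hm, _⟩ <;> rw [hm] <;> linarith)
      (by
        push_neg
        intro habs
        have : b - ε ≤ max c (b - ε) := le_max_right _ _
        linarith)
  have hac : |a - c| ≤ ε := abs_sub_le_iff.mpr ⟨by linarith, by linarith⟩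
  have hbd : |b - d| ≤ ε := abs_sub_le_iff.mpr ⟨by linarith, by linarith⟩
  have := max_le hac hbd
  linarith [hmax]

theorem stmt12 (a b c d ε : ℝ) (ha : 0 ≤ a) (hab : a < b) (hc : 0 ≤ c) (hcd : c < d) (hε : 0 < ε)
    (hlt : ε < min (max |a - c| |b - d|) (max ((b - a) / 2) ((d - c) / 2))) :
    ¬ ∃ Φ Ψ, IsInterleaving (intervalModule a b) (intervalModule c d) ε.toNNReal Φ Ψ := by
  rintro ⟨Φ, Ψ, h⟩
  have hmax : ε < max |a - c| |b - d| := hlt.trans_le (min_le_left _ _)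
  have hhalf : ε < max ((b - a) / 2) ((d - c) / 2) := hlt.trans_le (min_le_right _ _)
  rcases lt_max_iff.mp hhalf with hcase | hcase
  · exact main_aux ha hab hc hcd hε (by linarith) hmax h
  · have hmax' : ε < max |c - a| |d - b| := by
      rwa [abs_sub_comm c a, abs_sub_comm d b]
    exact main_aux hc hcd ha hab hε (by linarith) hmax' ⟨h.2, h.1⟩
end
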